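/- (Converse Lyapunov function with incremental difference bound.) Suppose f is uniformly L_f-Lipschitz on D and the system x_{k+1} = f(k, x_k) is uniformly exponentially stable in D, i.e. there exist d > 0 and λ ∈ (0,1) such that every solution with x_{k₀} = ξ ∈ D satisfies ‖x_k‖ ≤ d‖ξ‖λ^{k−k₀} for all k ≥ k₀. Then there exist a function V : ℕ → ℝⁿ → ℝ and constants c₁, c₂, c₃ > 0 and β ∈ (0,1) such that for all ξ, ζ ∈ D and all k: (a) c₁‖ξ‖² ≤ V(k, ξ) ≤ c₂‖ξ‖²; (b) V(k+1, f(k, ξ)) ≤ β² V(k, ξ); (c) |V(k, ξ) − V(k, ζ)| ≤ c₃ ‖ξ − ζ‖ (‖ξ‖ + ‖ζ‖). -/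

import Mathlib

open Finset

/-- Trajectory of a time-varying discrete system: `traj f k j ξ` is the state after
`j` steps starting from state `ξ` at time `k`. -/
def traj {E : Type*} (f : ℕ → E → E) (k : ℕ) : ℕ → E → E
  | 0 => fun ξ => ξ
  | (j+1) => fun ξ => f (k + j) (traj f k j ξ)

set_option maxHeartbeats 1600000 in
/-- Converse Lyapunov function with incremental difference bound (Lemma 4). -/
theorem converse_lyapunov_with_difference_bound
    (n : ℕ) (D : Set (EuclideanSpace ℝ (Fin n)))
    (f : ℕ → EuclideanSpace ℝ (Fin n) → EuclideanSpace ℝ (Fin n))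
    (Lf d lam : ℝ)
    (hD : IsCompact D) (h0D : (0 : EuclideanSpace ℝ (Fin n)) ∈ D)
    (hinv : ∀ k, ∀ x ∈ D, f k x ∈ D)
    (hf0 : ∀ k, f k 0 = 0)
    (hLf : 0 < Lf)
    (hLip : ∀ k, ∀ p ∈ D, ∀ q ∈ D, ‖f k p - f k q‖ ≤ Lf * ‖p - q‖)
    (hd : 0 < d) (hlam : 0 < lam ∧ lam < 1)
    (hES : ∀ (k₀ : ℕ) (x : ℕ → EuclideanSpace ℝ (Fin n)), x k₀ ∈ D →
      (∀ k, k₀ ≤ k → x (k + 1) = f k (x k)) →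
      ∀ k, k₀ ≤ k → ‖x k‖ ≤ d * ‖x k₀‖ * lam ^ (k - k₀)) :
    ∃ (V : ℕ → EuclideanSpace ℝ (Fin n) → ℝ) (c₁ c₂ c₃ β : ℝ),
      0 < c₁ ∧ 0 < c₂ ∧ 0 < c₃ ∧ 0 < β ∧ β < 1 ∧
      (∀ k, ∀ ξ ∈ D, c₁ * ‖ξ‖ ^ 2 ≤ V k ξ ∧ V k ξ ≤ c₂ * ‖ξ‖ ^ 2) ∧
      (∀ k, ∀ ξ ∈ D, V (k + 1) (f k ξ) ≤ β ^ 2 * V k ξ) ∧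
      (∀ k, ∀ ξ ∈ D, ∀ ζ ∈ D,
        |V k ξ - V k ζ| ≤ c₃ * ‖ξ - ζ‖ * (‖ξ‖ + ‖ζ‖)) := by
  obtain ⟨hlam0, hlam1⟩ := hlam
  -- choose horizon N
  obtain ⟨N0, hN0⟩ := exists_pow_lt_of_lt_one (show (0:ℝ) < 1/(2*d^2) by positivity) hlam1
  set N := max N0 1 with hNdef
  have hN1 : 1 ≤ N := le_max_right _ _
  have hdecay : d^2 * lam^(2*N) < 1/2 := by
    have h1 : lam ^ (2*N) ≤ lam ^ N0 :=
      pow_le_pow_of_le_one hlam0.le hlam1.le (by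
        simp only [hNdef]; omega)
    calc d^2 * lam^(2*N) ≤ d^2 * lam^N0 := by nlinarith
      _ < d^2 * (1/(2*d^2)) := by
          apply mul_lt_mul_of_pos_left hN0 (by positivity)
      _ = 1/2 := by field_simp
  -- basic trajectory facts
  have hmem : ∀ k j, ∀ ξ ∈ D, traj f k j ξ ∈ D := by
    intro k j
    induction j with
    | zero => intro ξ hξ; exact hξ
    | succ j ih => intro ξ hξ; exact hinv _ _ (ih ξ hξ)
  have hshift : ∀ k j ξ, traj f (k+1) j (f k ξ) = traj f k (j+1) ξ := by
    intro k j ξ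
    induction j with
    | zero => simp [traj]
    | succ j ih =>
        show f (k+1+j) (traj f (k+1) j (f k ξ)) = f (k+(j+1)) (traj f k (j+1) ξ)
        rw [ih, show k+1+j = k+(j+1) from by omega]
  have hbound : ∀ k j, ∀ ξ ∈ D, ‖traj f k j ξ‖ ≤ d * ‖ξ‖ * lam ^ j := by
    intro k j ξ hξ
    have hsol : ∀ m, k ≤ m → (fun m => traj f k (m - k) ξ) (m + 1)
        = f m ((fun m => traj f k (m - k) ξ) m) := by
      intro m hm
      simp only
      have h1 : m + 1 - k = (m - k) + 1 := by omega
      rw [h1]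
      show f (k + (m - k)) (traj f k (m-k) ξ) = f m (traj f k (m-k) ξ)
      rw [Nat.add_sub_cancel' hm]
    have := hES k (fun m => traj f k (m - k) ξ) (by simpa [traj] using hξ) hsol (k + j) (by omega)
    simpa [traj, Nat.add_sub_cancel_left] using this
  have hLipTraj : ∀ k j, ∀ ξ ∈ D, ∀ ζ ∈ D,
      ‖traj f k j ξ - traj f k j ζ‖ ≤ Lf ^ j * ‖ξ - ζ‖ := by
    intro k j
    induction j with
    | zero => intro ξ hξ ζ hζ; simp [traj]
    | succ j ih =>
        intro ξ hξ ζ hζ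
        calc ‖f (k+j) (traj f k j ξ) - f (k+j) (traj f k j ζ)‖
            ≤ Lf * ‖traj f k j ξ - traj f k j ζ‖ :=
              hLip _ _ (hmem k j ξ hξ) _ (hmem k j ζ hζ)
          _ ≤ Lf * (Lf ^ j * ‖ξ - ζ‖) :=
              mul_le_mul_of_nonneg_left (ih ξ hξ ζ hζ) hLf.le
          _ = Lf ^ (j+1) * ‖ξ - ζ‖ := by ring
  -- the Lyapunov function and constants
  set V : ℕ → EuclideanSpace ℝ (Fin n) → ℝ :=
    fun k ξ => ∑ j ∈ range N, ‖traj f k j ξ‖ ^ 2 with hV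
  set c₂ : ℝ := N * d^2 + 1 with hc₂
  have hc₂pos : 0 < c₂ := by positivity
  have hc₂1 : 1 ≤ c₂ := by
    have : (1:ℝ) ≤ N := by exact_mod_cast hN1
    nlinarith
  set β : ℝ := Real.sqrt (1 - 1/(2*c₂)) with hβ
  have hβsq : β ^ 2 = 1 - 1/(2*c₂) := by
    rw [hβ, sq, Real.mul_self_sqrt]
    have : 1/(2*c₂) ≤ 1 := by
      rw [div_le_one (by positivity)]; linarith
    linarith
  have hβpos : 0 < β := by
    apply Real.sqrt_pos.mpr
    have : 1/(2*c₂) < 1 := by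
      rw [div_lt_one (by positivity)]; linarith
    linarith
  have hβlt : β < 1 := by
    have h2 : β ^ 2 < 1 := by
      rw [hβsq]
      have : 0 < 1/(2*c₂) := by positivity
      linarith
    nlinarith
  set c₃ : ℝ := d * ∑ j ∈ range N, (Lf * lam) ^ j with hc₃
  have hsum_pos : (0:ℝ) < ∑ j ∈ range N, (Lf * lam) ^ j := by
    apply Finset.sum_pos (fun j _ => by positivity)
    exact ⟨0, mem_range.mpr (by omega)⟩
  have hc₃pos : 0 < c₃ := mul_pos hd hsum_pos
  -- bounds (a)
  have hlow : ∀ k, ∀ ξ ∈ D, 1 * ‖ξ‖ ^ 2 ≤ V k ξ := by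
    intro k ξ hξ
    rw [one_mul]
    have : ‖traj f k 0 ξ‖ ^ 2 ≤ V k ξ :=
      Finset.single_le_sum (f := fun j => ‖traj f k j ξ‖ ^ 2)
        (fun j _ => by positivity) (mem_range.mpr (by omega))
    simpa [traj] using this
  have hup : ∀ k, ∀ ξ ∈ D, V k ξ ≤ c₂ * ‖ξ‖ ^ 2 := by
    intro k ξ hξ
    have h1 : V k ξ ≤ ∑ j ∈ range N, d^2 * ‖ξ‖^2 := by
      apply Finset.sum_le_sum
      intro j _
      have hb := hbound k j ξ hξ
      have hb2 : ‖traj f k j ξ‖ ^ 2 ≤ (d * ‖ξ‖ * lam ^ j) ^ 2 :=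
        pow_le_pow_left₀ (norm_nonneg _) hb 2
      have hl : lam ^ j ≤ 1 := pow_le_one₀ hlam0.le hlam1.le
      have hl0 : (0:ℝ) ≤ lam ^ j := by positivity
      have hll : lam ^ j * lam ^ j ≤ 1 := by nlinarith
      nlinarith [norm_nonneg ξ, sq_nonneg (d * ‖ξ‖), sq_nonneg ‖traj f k j ξ‖]
    rw [Finset.sum_const, card_range, nsmul_eq_mul] at h1
    have : (N:ℝ) * (d^2 * ‖ξ‖^2) ≤ c₂ * ‖ξ‖^2 := by
      rw [hc₂]; nlinarith [norm_nonneg ξ, sq_nonneg ‖ξ‖]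
    linarith
  -- decrease (b)
  have hdec : ∀ k, ∀ ξ ∈ D, V (k + 1) (f k ξ) ≤ β ^ 2 * V k ξ := by
    intro k ξ hξ
    have hshifted : V (k+1) (f k ξ) = ∑ j ∈ range N, ‖traj f k (j+1) ξ‖ ^ 2 := by
      simp only [hV]
      exact Finset.sum_congr rfl fun j _ => by rw [hshift]
    have htel : ∑ j ∈ range N, ‖traj f k (j+1) ξ‖ ^ 2
        = V k ξ - ‖ξ‖^2 + ‖traj f k N ξ‖^2 := by
      have h1 := Finset.sum_range_succ' (fun j => ‖traj f k j ξ‖ ^ 2) N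
      have h2 := Finset.sum_range_succ (fun j => ‖traj f k j ξ‖ ^ 2) N
      simp only [hV]
      simp only [traj] at h1 ⊢
      linarith
    have hend : ‖traj f k N ξ‖^2 ≤ d^2 * lam^(2*N) * ‖ξ‖^2 := by
      have hb := hbound k N ξ hξ
      have hb2 : ‖traj f k N ξ‖ ^ 2 ≤ (d * ‖ξ‖ * lam ^ N) ^ 2 :=
        pow_le_pow_left₀ (norm_nonneg _) hb 2
      calc ‖traj f k N ξ‖ ^ 2 ≤ (d * ‖ξ‖ * lam ^ N) ^ 2 := hb2
        _ = d^2 * lam^(2*N) * ‖ξ‖^2 := by rw [pow_mul]; ring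
    have hxi2 : V k ξ / c₂ ≤ ‖ξ‖^2 := by
      rw [div_le_iff₀ hc₂pos]
      have := hup k ξ hξ; nlinarith
    have key : V (k+1) (f k ξ) ≤ V k ξ - (1/2) * ‖ξ‖^2 := by
      rw [hshifted, htel]
      nlinarith [sq_nonneg ‖ξ‖]
    have : V k ξ - (1/2) * ‖ξ‖^2 ≤ V k ξ - (1/2) * (V k ξ / c₂) := by
      nlinarith
    rw [hβsq]
    have heq : V k ξ - (1/2) * (V k ξ / c₂) = (1 - 1/(2*c₂)) * V k ξ := by
      field_simp
    linarith
  -- difference bound (c)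
  have hdiff : ∀ k, ∀ ξ ∈ D, ∀ ζ ∈ D,
      |V k ξ - V k ζ| ≤ c₃ * ‖ξ - ζ‖ * (‖ξ‖ + ‖ζ‖) := by
    intro k ξ hξ ζ hζ
    have sq_diff : ∀ (A B : EuclideanSpace ℝ (Fin n)),
        |‖A‖^2 - ‖B‖^2| ≤ ‖A - B‖ * (‖A‖ + ‖B‖) := by
      intro A B
      have h1 : ‖A‖^2 - ‖B‖^2 = (‖A‖ - ‖B‖) * (‖A‖ + ‖B‖) := by ring
      rw [h1, abs_mul, abs_of_nonneg (show (0:ℝ) ≤ ‖A‖ + ‖B‖ by positivity)]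
      exact mul_le_mul_of_nonneg_right (abs_norm_sub_norm_le A B) (by positivity)
    have h1 : V k ξ - V k ζ = ∑ j ∈ range N, (‖traj f k j ξ‖^2 - ‖traj f k j ζ‖^2) := by
      rw [hV]; rw [Finset.sum_sub_distrib]
    rw [h1]
    calc |∑ j ∈ range N, (‖traj f k j ξ‖^2 - ‖traj f k j ζ‖^2)|
        ≤ ∑ j ∈ range N, |‖traj f k j ξ‖^2 - ‖traj f k j ζ‖^2| :=
          Finset.abs_sum_le_sum_abs _ _
      _ ≤ ∑ j ∈ range N, d * (Lf * lam)^j * ‖ξ - ζ‖ * (‖ξ‖ + ‖ζ‖) := by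
          apply Finset.sum_le_sum
          intro j _
          have hA := hbound k j ξ hξ
          have hB := hbound k j ζ hζ
          have hAB := hLipTraj k j ξ hξ ζ hζ
          calc |‖traj f k j ξ‖^2 - ‖traj f k j ζ‖^2|
              ≤ ‖traj f k j ξ - traj f k j ζ‖ * (‖traj f k j ξ‖ + ‖traj f k j ζ‖) :=
                sq_diff _ _
            _ ≤ (Lf^j * ‖ξ - ζ‖) * (d * ‖ξ‖ * lam^j + d * ‖ζ‖ * lam^j) := by
                apply mul_le_mul hAB (by linarith) (by positivity)
                positivity
            _ = d * (Lf * lam)^j * ‖ξ - ζ‖ * (‖ξ‖ + ‖ζ‖) := by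
                rw [mul_pow]; ring
      _ = c₃ * ‖ξ - ζ‖ * (‖ξ‖ + ‖ζ‖) := by
          rw [hc₃, ← Finset.sum_mul, ← Finset.sum_mul, ← Finset.mul_sum]
    -- done
  exact ⟨V, 1, c₂, c₃, β, one_pos, hc₂pos, hc₃pos, hβpos, hβlt,
    fun k ξ hξ => ⟨hlow k ξ hξ, hup k ξ hξ⟩, hdec, hdiff⟩
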